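/- There exists a complex number c such that Σ_{k=2}^{n−1} (−1)^k (k+1/2)^{iπ/2} = −((−1)^n/2)·(n−1/2)^{iπ/2} + c + O(1/n) as n → ∞. -/

import Mathlib

open Finset Real

noncomputable section SumS0Aux

namespace SumS0Aux

lemma hderiv1 {w : ℂ} {y : ℝ} (hy : 0 < y) :
    HasDerivAt (fun t : ℝ => (t:ℂ) ^ w) (w * (y:ℂ) ^ (w-1)) y :=
  ((Complex.hasStrictDerivAt_cpow_const
    (Complex.ofReal_mem_slitPlane.2 hy)).hasDerivAt).comp_ofReal

lemma hderiv2 {w : ℂ} {y : ℝ} (hy : 0 < y) :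
    HasDerivAt (fun t : ℝ => ((t:ℂ)+1) ^ w) (w * ((y:ℂ)+1) ^ (w-1)) y := by
  have h0 : ((y:ℂ)+1) ∈ Complex.slitPlane := by
    rw [Complex.mem_slitPlane_iff]; left; simp; linarith
  have hbase : HasDerivAt (fun z : ℂ => z + 1) 1 (y:ℂ) := (hasDerivAt_id _).add_const 1
  have h2 := ((Complex.hasStrictDerivAt_cpow_const (c := w) h0).hasDerivAt.comp (y:ℂ) hbase)
  simpa [Function.comp] using h2.comp_ofReal

lemma cpow_diff_le (w : ℂ) {a x : ℝ} (ha : 0 < a) (hax : a ≤ x) (hw : w.re ≤ 1) :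
    ‖((x:ℂ) + 1) ^ w - (x:ℂ) ^ w‖ ≤ ‖w‖ * a ^ (w.re - 1) := by
  have hx : 0 < x := ha.trans_le hax
  have hconv : Convex ℝ (Set.Icc x (x+1)) := convex_Icc _ _
  have key := hconv.norm_image_sub_le_of_norm_hasDerivWithin_le
    (f := fun t : ℝ => (t:ℂ) ^ w) (f' := fun t : ℝ => w * (t:ℂ) ^ (w-1))
    (C := ‖w‖ * a ^ (w.re - 1)) ?_ ?_
    (Set.mem_Icc.2 ⟨le_rfl, by linarith⟩) (Set.mem_Icc.2 ⟨by linarith, le_rfl⟩)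
  · have : ((x+1 : ℝ) : ℂ) = (x:ℂ) + 1 := by push_cast; ring
    simpa [this] using key
  · intro y hy
    exact (hderiv1 (lt_of_lt_of_le hx hy.1)).hasDerivWithinAt
  · intro y hy
    have hy0 : 0 < y := lt_of_lt_of_le hx hy.1
    rw [norm_mul, Complex.norm_cpow_eq_rpow_re_of_pos hy0]
    have : y ^ (w-1).re ≤ a ^ (w.re - 1) := by
      rw [Complex.sub_re, Complex.one_re]
      exact Real.rpow_le_rpow_of_nonpos ha (hax.trans hy.1) (by linarith)
    exact mul_le_mul_of_nonneg_left this (norm_nonneg w)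

lemma cpow_diff2_le (w : ℂ) {a x : ℝ} (ha : 0 < a) (hax : a + 1 ≤ x) (hw : w.re ≤ 1) :
    ‖((x:ℂ) + 1) ^ w - 2 * (x:ℂ) ^ w + ((x:ℂ) - 1) ^ w‖
      ≤ ‖w‖ * ‖w - 1‖ * a ^ (w.re - 2) := by
  have hx1 : 0 < x - 1 := by linarith
  have hconv : Convex ℝ (Set.Icc (x-1) x) := convex_Icc _ _
  have key := hconv.norm_image_sub_le_of_norm_hasDerivWithin_le
    (f := fun t : ℝ => ((t:ℂ)+1) ^ w - (t:ℂ) ^ w)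
    (f' := fun t : ℝ => w * ((t:ℂ)+1) ^ (w-1) - w * (t:ℂ) ^ (w-1))
    (C := ‖w‖ * ‖w - 1‖ * a ^ (w.re - 2)) ?_ ?_
    (Set.mem_Icc.2 ⟨le_rfl, by linarith⟩) (Set.mem_Icc.2 ⟨by linarith, le_rfl⟩)
  · have h1 : ((x - 1 : ℝ) : ℂ) = (x:ℂ) - 1 := by push_cast; ring
    have h2 : ((x:ℂ) - 1) + 1 = (x:ℂ) := by ring
    rw [h1, h2] at key
    calc ‖((x:ℂ) + 1) ^ w - 2 * (x:ℂ) ^ w + ((x:ℂ) - 1) ^ w‖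
        = ‖(((x:ℂ)+1) ^ w - (x:ℂ) ^ w) - ((x:ℂ) ^ w - ((x:ℂ)-1) ^ w)‖ := by ring_nf
      _ ≤ ‖w‖ * ‖w - 1‖ * a ^ (w.re - 2) := by
          simpa using key
  · intro y hy
    have hy0 : 0 < y := lt_of_lt_of_le hx1 hy.1
    exact ((hderiv2 hy0).sub (hderiv1 hy0)).hasDerivWithinAt
  · intro y hy
    have hy0 : 0 < y := lt_of_lt_of_le hx1 hy.1
    have hay : a ≤ y := by have := hy.1; linarith
    rw [← mul_sub, norm_mul]
    have := cpow_diff_le (w - 1) ha hay (by rw [Complex.sub_re, Complex.one_re]; linarith)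
    have hre : (w - 1).re - 1 = w.re - 2 := by
      rw [Complex.sub_re, Complex.one_re]; ring
    rw [hre] at this
    calc ‖w‖ * ‖((y:ℂ) + 1) ^ (w-1) - (y:ℂ) ^ (w-1)‖
        ≤ ‖w‖ * (‖w - 1‖ * a ^ (w.re - 2)) :=
          mul_le_mul_of_nonneg_left this (norm_nonneg w)
      _ = ‖w‖ * ‖w - 1‖ * a ^ (w.re - 2) := by ring

def sc : ℂ := Complex.I * (π : ℂ) / 2

lemma sc_re : sc.re = 0 := by simp [sc]

def F (x : ℝ) : ℂ := (x : ℂ) ^ sc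

def T (n : ℕ) : ℂ :=
  (∑ k ∈ Finset.Icc 2 (n-1), (-1:ℂ)^k * F ((k:ℝ) + 1/2)) + (-1:ℂ)^n / 2 * F ((n:ℝ) - 1/2)

lemma step1 {n : ℕ} (hn : 2 ≤ n) :
    T (n+1) - T n = (-1:ℂ)^n / 2 * (F ((n:ℝ) + 1/2) - F ((n:ℝ) - 1/2)) := by
  have hsum : ∑ k ∈ Finset.Icc 2 n, ((-1:ℂ)^k * F ((k:ℝ) + 1/2))
      = (∑ k ∈ Finset.Icc 2 (n-1), ((-1:ℂ)^k * F ((k:ℝ) + 1/2)))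
        + (-1:ℂ)^n * F ((n:ℝ) + 1/2) := by
    conv_lhs => rw [show n = (n-1)+1 by omega]
    rw [Finset.sum_Icc_succ_top (by omega)]
    rw [show (n-1)+1 = n by omega]
  have harg : ((n+1:ℕ):ℝ) - 1/2 = (n:ℝ) + 1/2 := by push_cast; ring
  simp only [T, Nat.add_sub_cancel, hsum, harg, pow_succ]
  ring

def K2 : ℝ := ‖sc‖ * ‖sc - 1‖

def C2 : ℝ := 2 * K2

lemma K2_nonneg : 0 ≤ K2 := mul_nonneg (norm_nonneg _) (norm_nonneg _)

lemma C2_nonneg : 0 ≤ C2 := by have := K2_nonneg; simp [C2]; linarith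

lemma step2norm {n : ℕ} (hn : 2 ≤ n) : ‖T (n+2) - T n‖ ≤ C2 / (n:ℝ)^2 := by
  have h1 := step1 hn
  have h2 := step1 (show 2 ≤ n+1 by omega)
  have e1 : ((n+1:ℕ):ℝ) + 1/2 = ((n:ℝ) + 1/2) + 1 := by push_cast; ring
  have e2 : ((n+1:ℕ):ℝ) - 1/2 = (n:ℝ) + 1/2 := by push_cast; ring
  have e3 : (n:ℝ) - 1/2 = ((n:ℝ) + 1/2) - 1 := by ring
  rw [e1, e2] at h2
  rw [e3] at h1
  set x : ℝ := (n:ℝ) + 1/2 with hx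
  have hT : T (n+2) - T n
      = (-1:ℂ)^n/2 * -(F (x+1) - 2 * F x + F (x-1)) := by
    have hsplit : T (n+2) - T n = (T (n+1+1) - T (n+1)) + (T (n+1) - T n) := by
      have : n+2 = n+1+1 := rfl
      rw [this]; ring
    rw [hsplit, h1, h2, pow_succ]; ring
  have hnorm : ‖T (n+2) - T n‖ = (1/2) * ‖F (x+1) - 2 * F x + F (x-1)‖ := by
    rw [hT, norm_mul, norm_neg, norm_div]
    simp
  have hF1 : F (x+1) = ((x:ℂ) + 1) ^ sc := by unfold F; push_cast; ring_nf
  have hF3 : F (x-1) = ((x:ℂ) - 1) ^ sc := by unfold F; push_cast; ring_nf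
  have hF2 : F x = (x:ℂ) ^ sc := rfl
  have ha : (0:ℝ) < (n:ℝ) - 1/2 := by
    have : (2:ℝ) ≤ (n:ℝ) := by exact_mod_cast hn
    linarith
  have hax : ((n:ℝ) - 1/2) + 1 ≤ x := by rw [hx]; linarith
  have hbd := cpow_diff2_le sc ha hax (by rw [sc_re]; norm_num)
  rw [sc_re] at hbd
  rw [hnorm, hF1, hF2, hF3]
  have hn2 : (2:ℝ) ≤ (n:ℝ) := by exact_mod_cast hn
  have hrpow : ((n:ℝ) - 1/2) ^ ((0:ℝ) - 2) = (((n:ℝ) - 1/2)^2)⁻¹ := by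
    rw [show ((0:ℝ) - 2) = -((2:ℕ):ℝ) by norm_num, Real.rpow_neg ha.le, Real.rpow_natCast]
  rw [hrpow] at hbd
  have hK : ‖sc‖ * ‖sc - 1‖ = K2 := rfl
  rw [hK] at hbd
  have hfinal : (1/2) * (K2 * (((n:ℝ) - 1/2)^2)⁻¹) ≤ C2 / (n:ℝ)^2 := by
    have hKn := K2_nonneg
    have heq : (1/2) * (K2 * (((n:ℝ) - 1/2)^2)⁻¹) = K2 / (2 * ((n:ℝ) - 1/2)^2) := by
      field_simp
    rw [heq, C2, div_le_div_iff₀ (by positivity) (by positivity)]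
    have hfact : (n:ℝ)^2 ≤ 4*((n:ℝ)-1/2)^2 := by nlinarith
    nlinarith [mul_le_mul_of_nonneg_left hfact hKn]
  calc (1/2) * ‖((x:ℂ) + 1) ^ sc - 2 * (x:ℂ) ^ sc + ((x:ℂ) - 1) ^ sc‖
      ≤ (1/2) * (K2 * (((n:ℝ) - 1/2)^2)⁻¹) := by linarith [hbd]
    _ ≤ C2 / (n:ℝ)^2 := hfinal

lemma chain (j : ℕ) : ∀ n : ℕ, 2 ≤ n →
    ‖T (n + 2*j) - T n‖ ≤ C2 * (1/((n:ℝ)-1) - 1/((n:ℝ)+2*j-1)) / 2 := by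
  induction j with
  | zero => intro n hn; simp
  | succ j ih =>
    intro n hn
    have hn2 : (2:ℝ) ≤ (n:ℝ) := by exact_mod_cast hn
    have h1 := step2norm hn
    have h2 := ih (n+2) (by omega)
    have hC := C2_nonneg
    rw [show n + 2*(j+1) = (n+2) + 2*j by ring]
    push_cast at h2 ⊢
    rw [show (n:ℝ)+2-1 = (n:ℝ)+1 by ring,
      show (n:ℝ)+2+2*(j:ℝ)-1 = (n:ℝ)+2*(j:ℝ)+1 by ring] at h2
    rw [show (n:ℝ)+2*((j:ℝ)+1)-1 = (n:ℝ)+2*(j:ℝ)+1 by ring]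
    have htri : ‖T ((n+2) + 2*j) - T n‖ ≤ ‖T ((n+2)+2*j) - T (n+2)‖ + ‖T (n+2) - T n‖ := by
      have he : T ((n+2) + 2*j) - T n = (T ((n+2)+2*j) - T (n+2)) + (T (n+2) - T n) := by ring
      rw [he]; exact norm_add_le _ _
    have key1 : C2 / (n:ℝ)^2 ≤ C2 * (1/((n:ℝ)-1) - 1/((n:ℝ)+1)) / 2 := by
      have h1' : (n:ℝ) - 1 ≠ 0 := ne_of_gt (by linarith)
      have h2' : (n:ℝ) + 1 ≠ 0 := ne_of_gt (by linarith)
      have e : C2 * (1/((n:ℝ)-1) - 1/((n:ℝ)+1)) / 2 = C2 / (((n:ℝ)-1)*((n:ℝ)+1)) := by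
        field_simp
        ring
      rw [e, div_le_div_iff₀ (by positivity) (by nlinarith)]
      nlinarith
    have key2 : C2 * (1/((n:ℝ)+1) - 1/((n:ℝ)+2*(j:ℝ)+1)) / 2
        + C2 * (1/((n:ℝ)-1) - 1/((n:ℝ)+1)) / 2
        = C2 * (1/((n:ℝ)-1) - 1/((n:ℝ)+2*(j:ℝ)+1)) / 2 := by ring
    linarith [htri, h1, h2, key1, key2]

def D : ℝ := ‖sc‖

lemma D_nonneg : 0 ≤ D := norm_nonneg _

lemma adjBound {n : ℕ} (hn : 2 ≤ n) : ‖T (n+1) - T n‖ ≤ D / n := by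
  have h1 := step1 hn
  have hn2 : (2:ℝ) ≤ (n:ℝ) := by exact_mod_cast hn
  have ha : (0:ℝ) < (n:ℝ) - 1/2 := by linarith
  have hFa : F ((n:ℝ) + 1/2) = ((((n:ℝ) - 1/2 : ℝ)):ℂ) ^ sc
      + ((((((n:ℝ) - 1/2 : ℝ)):ℂ) + 1) ^ sc - ((((n:ℝ) - 1/2 : ℝ)):ℂ) ^ sc) := by
    have hcast : (((n:ℝ) + 1/2 : ℝ):ℂ) = ((((n:ℝ) - 1/2 : ℝ)):ℂ) + 1 := by push_cast; ring
    rw [F, hcast]; ring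
  have hFb : F ((n:ℝ) - 1/2) = ((((n:ℝ) - 1/2 : ℝ)):ℂ) ^ sc := rfl
  have hbd := cpow_diff_le sc (a := (n:ℝ) - 1/2) (x := (n:ℝ) - 1/2) ha le_rfl
    (by rw [sc_re]; norm_num)
  rw [sc_re, show ((0:ℝ) - 1) = -1 by ring, Real.rpow_neg_one] at hbd
  have hnorm : ‖T (n+1) - T n‖
      = (1/2) * ‖(((((n:ℝ) - 1/2 : ℝ)):ℂ) + 1) ^ sc - ((((n:ℝ) - 1/2 : ℝ)):ℂ) ^ sc‖ := by
    rw [h1, hFa, hFb, norm_mul, norm_div]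
    have : ((((n:ℝ) - 1/2 : ℝ)):ℂ) ^ sc
        + ((((((n:ℝ) - 1/2 : ℝ)):ℂ) + 1) ^ sc - ((((n:ℝ) - 1/2 : ℝ)):ℂ) ^ sc)
        - ((((n:ℝ) - 1/2 : ℝ)):ℂ) ^ sc
        = ((((((n:ℝ) - 1/2 : ℝ)):ℂ) + 1) ^ sc - ((((n:ℝ) - 1/2 : ℝ)):ℂ) ^ sc) := by ring
    rw [this]
    simp
  rw [hnorm]
  have hD : ‖sc‖ = D := rfl
  rw [hD] at hbd
  have hDn := D_nonneg
  have hfin : (1/2) * (D * ((n:ℝ) - 1/2)⁻¹) ≤ D / n := by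
    have heq : (1/2) * (D * ((n:ℝ) - 1/2)⁻¹) = D / (2 * ((n:ℝ) - 1/2)) := by field_simp
    rw [heq, div_le_div_iff₀ (by positivity) (by positivity)]
    nlinarith
  calc (1/2) * ‖(((((n:ℝ) - 1/2 : ℝ)):ℂ) + 1) ^ sc - ((((n:ℝ) - 1/2 : ℝ)):ℂ) ^ sc‖
      ≤ (1/2) * (D * ((n:ℝ) - 1/2)⁻¹) := by linarith
    _ ≤ D / n := hfin

def B : ℝ := C2 + D

lemma B_nonneg : 0 ≤ B := add_nonneg C2_nonneg D_nonneg

lemma chainBound {n : ℕ} (hn : 2 ≤ n) (j : ℕ) : ‖T (n + 2*j) - T n‖ ≤ C2 / n := by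
  have h := chain j n hn
  have hn2 : (2:ℝ) ≤ (n:ℝ) := by exact_mod_cast hn
  have hC := C2_nonneg
  have h1 : (0:ℝ) < (n:ℝ) - 1 := by linarith
  have h2 : (0:ℝ) < (n:ℝ) + 2*(j:ℝ) - 1 := by
    have : (0:ℝ) ≤ (j:ℝ) := Nat.cast_nonneg j
    linarith
  have h3 : C2 * (1/((n:ℝ)-1) - 1/((n:ℝ)+2*(j:ℝ)-1)) / 2 ≤ C2 / n := by
    have hinv1 : 1/((n:ℝ)-1) ≤ 2/(n:ℝ) := by
      rw [div_le_div_iff₀ h1 (by positivity)]; linarith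
    have hinv2 : (0:ℝ) ≤ 1/((n:ℝ)+2*(j:ℝ)-1) := by positivity
    have hmul : C2 * (1/((n:ℝ)-1) - 1/((n:ℝ)+2*(j:ℝ)-1)) ≤ C2 * (2/(n:ℝ)) := by
      apply mul_le_mul_of_nonneg_left _ hC
      linarith
    have he : C2 * (2/(n:ℝ)) / 2 = C2 / (n:ℝ) := by
      field_simp
    linarith
  linarith [h, h3]

lemma genBound {n m : ℕ} (hn : 2 ≤ n) (hnm : n ≤ m) : ‖T m - T n‖ ≤ B / n := by
  have hn2 : (2:ℝ) ≤ (n:ℝ) := by exact_mod_cast hn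
  have hC := C2_nonneg
  have hD := D_nonneg
  rcases Nat.even_or_odd (m - n) with ⟨j, hj⟩ | ⟨j, hj⟩
  · have hm : m = n + 2*j := by omega
    rw [hm]
    calc ‖T (n + 2*j) - T n‖ ≤ C2 / n := chainBound hn j
      _ ≤ B / n := by
        rw [B]
        gcongr
        linarith
  · have hm : m = (n+1) + 2*j := by omega
    rw [hm]
    have hstep := adjBound hn
    have hchain := chainBound (show 2 ≤ n+1 by omega) j
    have hcast : ((n+1:ℕ):ℝ) = (n:ℝ) + 1 := by push_cast; ring
    rw [hcast] at hchain
    calc ‖T ((n+1) + 2*j) - T n‖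
        ≤ ‖T ((n+1) + 2*j) - T (n+1)‖ + ‖T (n+1) - T n‖ := by
          have : T ((n+1) + 2*j) - T n = (T ((n+1) + 2*j) - T (n+1)) + (T (n+1) - T n) := by
            ring
          rw [this]; exact norm_add_le _ _
      _ ≤ C2 / ((n:ℝ)+1) + D / n := add_le_add hchain hstep
      _ ≤ B / n := by
          rw [B, add_div]
          have : C2 / ((n:ℝ)+1) ≤ C2 / (n:ℝ) := by
            rw [div_le_div_iff₀ (by positivity) (by positivity)]
            nlinarith
          linarith

lemma exists_limit : ∃ c : ℂ, ∀ n : ℕ, 2 ≤ n → ‖T n - c‖ ≤ B / n := by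
  have hcauchy : CauchySeq (fun j : ℕ => T (j+2)) := by
    apply cauchySeq_of_le_tendsto_0' (fun j : ℕ => B / ((j:ℝ)+2))
    · intro j k hjk
      rw [dist_eq_norm, norm_sub_rev]
      have := genBound (show 2 ≤ j+2 by omega) (show j+2 ≤ k+2 by omega)
      have hcast : ((j+2:ℕ):ℝ) = (j:ℝ) + 2 := by push_cast; ring
      rwa [hcast] at this
    · have h := (tendsto_const_div_atTop_nhds_zero_nat B).comp (Filter.tendsto_add_atTop_nat 2)
      convert h using 2 with j
      simp only [Function.comp]
      push_cast
      ring
  obtain ⟨c, hc⟩ := cauchySeq_tendsto_of_complete hcauchy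
  refine ⟨c, fun n hn => ?_⟩
  have h1 : Filter.Tendsto (fun j : ℕ => ‖T n - T (j+2)‖) Filter.atTop (nhds ‖T n - c‖) :=
    (Filter.Tendsto.sub tendsto_const_nhds hc).norm
  apply le_of_tendsto h1
  filter_upwards [Filter.eventually_ge_atTop n] with j hj
  rw [norm_sub_rev]
  exact genBound hn (by omega)

end SumS0Aux

/-- `Σ_{k=2}^{n−1} (−1)^k (k+1/2)^{iπ/2} = −((−1)^n/2)·(n−1/2)^{iπ/2} + c + O(1/n)`
    for some constant `c`. -/
theorem sum_S0_asymptotics :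
    ∃ c : ℂ, ∃ A > (0 : ℝ), ∃ N : ℕ, ∀ n : ℕ, n ≥ N →
      ‖(∑ k ∈ Finset.Icc 2 (n - 1), (-1 : ℂ)^k * ((k : ℂ) + 1/2) ^ (Complex.I * (π : ℂ)/2))
        - (-((-1 : ℂ)^n / 2) * ((n : ℂ) - 1/2) ^ (Complex.I * (π : ℂ)/2) + c)‖
        ≤ A / (n : ℝ) := by
  obtain ⟨c, hc⟩ := SumS0Aux.exists_limit
  refine ⟨c, SumS0Aux.B + 1, by have := SumS0Aux.B_nonneg; linarith, 2, fun n hn => ?_⟩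
  have hkey := hc n hn
  have heq : SumS0Aux.T n - c
      = (∑ k ∈ Finset.Icc 2 (n - 1), (-1 : ℂ)^k * ((k : ℂ) + 1/2) ^ (Complex.I * (π : ℂ)/2))
        - (-((-1 : ℂ)^n / 2) * ((n : ℂ) - 1/2) ^ (Complex.I * (π : ℂ)/2) + c) := by
    unfold SumS0Aux.T SumS0Aux.F SumS0Aux.sc
    have hsum : (∑ k ∈ Finset.Icc 2 (n-1), (-1:ℂ)^k * (((((k:ℝ) + 1/2 : ℝ)):ℂ)) ^ (Complex.I * (π : ℂ)/2))
        = ∑ k ∈ Finset.Icc 2 (n - 1), (-1 : ℂ)^k * ((k : ℂ) + 1/2) ^ (Complex.I * (π : ℂ)/2) := by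
      refine Finset.sum_congr rfl fun k _ => ?_
      congr 2
      push_cast
      ring
    rw [hsum]
    have hb : ((((n:ℝ) - 1/2 : ℝ)):ℂ) = (n:ℂ) - 1/2 := by push_cast; ring
    rw [hb]
    ring
  rw [← heq]
  have hn1 : (0:ℝ) < (n:ℝ) := by
    have : 2 ≤ n := hn
    positivity
  calc ‖SumS0Aux.T n - c‖ ≤ SumS0Aux.B / n := hkey
    _ ≤ (SumS0Aux.B + 1) / n := by
      gcongr
      linarith
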